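/- (Analytic core of Theorem 1: achievability of the extremal symmetric point) For every x ∈ [1/N, 1], the one-dimensional density evolution map at the extremal symmetric point satisfies F(x) = ((1−p) + p·λ̄^N(x))·λ̄^N(x) < x. Hence density evolution makes strict progress whenever the residual erasure probability is at least 1/N. -/

import Mathlib

open Real Filter

noncomputable def qp (p x : ℝ) : ℝ :=
  (Real.sqrt ((1 - p) ^ 2 + 4 * p * x) - (1 - p)) / (2 * p)

noncomputable def aCoeff (p : ℝ) (i : ℕ) : ℝ :=
  (∑ k ∈ Finset.range i, (Nat.choose (2 * i - 1) k : ℝ) * p ^ k) /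
    (i * (1 + p) ^ (2 * i - 1))

noncomputable def Gpart (p : ℝ) (N : ℕ) : ℝ := ∑ i ∈ Finset.Icc 1 N, aCoeff p i

noncomputable def Sp (p x : ℝ) : ℝ := - Real.log (qp p (1 - x))

noncomputable def rhoN (p μ : ℝ) (N : ℕ) (x : ℝ) : ℝ :=
  (μ + (∑ i ∈ Finset.Icc 1 N, aCoeff p i * x ^ i) + x ^ N) / (μ + Gpart p N + 1)

noncomputable def lamBarN (p μ : ℝ) (N : ℕ) (x : ℝ) : ℝ :=
  Real.exp (-(μ + Gpart p N + 1) * rhoN p μ N (1 - x))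

noncomputable def deSym (p μ : ℝ) (N : ℕ) (x : ℝ) : ℝ :=
  ((1 - p) + p * lamBarN p μ N x) * lamBarN p μ N x

noncomputable def cornerMap (p μ : ℝ) (N : ℕ) (α ε₁ ε₂ : ℝ) (y : ℝ) : ℝ :=
  ((1 - p) + p * Real.exp (-(α * (1 - ε₁)))) *
    Real.exp (-(α * (1 - ε₂)) * rhoN p μ N (1 - y))

namespace S9

/-- `z = p/(1+p)^2`. -/
noncomputable def zz (p : ℝ) : ℝ := p / (1 + p) ^ 2

/-- `τ = (1-p)/(1+p)`. -/
noncomputable def tt (p : ℝ) : ℝ := (1 - p) / (1 + p)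

/-- partial sums of central binomial series at `z`. -/
noncomputable def cc (p : ℝ) (i : ℕ) : ℝ :=
  ∑ n ∈ Finset.range i, (Nat.choose (2 * n) n : ℝ) * zz p ^ n

/-- `DD m = (2m)!/m!`. -/
noncomputable def DD (m : ℕ) : ℝ := ((2 * m).factorial : ℝ) / (m.factorial : ℝ)

/-- Scaled Taylor remainders of `(1-4w)^(-1/2)`. -/
noncomputable def Uf (m k : ℕ) (w : ℝ) : ℝ :=
  DD m * (1 - 4 * w) ^ (-(m : ℝ) - 1 / 2)
    - ∑ j ∈ Finset.range k, DD (m + j) * w ^ j / (j.factorial : ℝ)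

lemma DD_pos (m : ℕ) : 0 < DD m := by
  unfold DD
  positivity

lemma DD_succ (m : ℕ) : DD (m + 1) = (4 * m + 2) * DD m := by
  unfold DD
  have h1 : (2 * (m + 1)) = (2 * m + 1) + 1 := by ring
  rw [h1, Nat.factorial_succ, Nat.factorial_succ, Nat.factorial_succ]
  push_cast
  have hm : ((m.factorial : ℝ)) ≠ 0 := by positivity
  field_simp
  ring

lemma DD_div_factorial (j : ℕ) : DD j / (j.factorial : ℝ) = (Nat.choose (2 * j) j : ℝ) := by
  have h := Nat.choose_mul_factorial_mul_factorial (show j ≤ 2 * j by omega)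
  have h2 : 2 * j - j = j := by omega
  rw [h2] at h
  have hj : ((j.factorial : ℝ)) ≠ 0 := by positivity
  have : ((2 * j).factorial : ℝ) = (Nat.choose (2 * j) j : ℝ) * j.factorial * j.factorial := by
    exact_mod_cast congrArg (Nat.cast (R := ℝ)) h.symm
  unfold DD
  rw [this]
  field_simp

lemma Uf_zero (m k : ℕ) : Uf m (k + 1) 0 = 0 := by
  unfold Uf
  rw [Finset.sum_range_succ']
  simp [Real.one_rpow]

lemma Uf_hasDerivAt (m k : ℕ) {w : ℝ} (hw : (1 : ℝ) - 4 * w ≠ 0) :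
    HasDerivAt (Uf m (k + 1)) (Uf (m + 1) k w) w := by
  have h1 : HasDerivAt (fun w : ℝ => 1 - 4 * w) (-4) w := by
    simpa using ((hasDerivAt_id w).const_mul (4 : ℝ)).const_sub 1
  have h2 : HasDerivAt (fun w : ℝ => (1 - 4 * w) ^ (-(m : ℝ) - 1 / 2))
      (-4 * (-(m : ℝ) - 1 / 2) * (1 - 4 * w) ^ (-(m : ℝ) - 1 / 2 - 1)) w :=
    h1.rpow_const (Or.inl hw)
  have h3 : HasDerivAt (fun w : ℝ => DD m * (1 - 4 * w) ^ (-(m : ℝ) - 1 / 2))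
      (DD m * (-4 * (-(m : ℝ) - 1 / 2) * (1 - 4 * w) ^ (-(m : ℝ) - 1 / 2 - 1))) w :=
    h2.const_mul _
  have h4 : HasDerivAt (fun w : ℝ => ∑ j ∈ Finset.range (k + 1), DD (m + j) * w ^ j / (j.factorial : ℝ))
      (∑ j ∈ Finset.range (k + 1), DD (m + j) * ((j : ℝ) * w ^ (j - 1)) / (j.factorial : ℝ)) w := by
    apply HasDerivAt.fun_sum
    intro j _
    exact (hasDerivAt_pow j w).const_mul (DD (m + j)) |>.div_const _
  have hsum : (∑ j ∈ Finset.range (k + 1), DD (m + j) * ((j : ℝ) * w ^ (j - 1)) / (j.factorial : ℝ))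
      = ∑ j ∈ Finset.range k, DD (m + 1 + j) * w ^ j / (j.factorial : ℝ) := by
    rw [Finset.sum_range_succ']
    simp only [Nat.cast_zero, zero_mul, mul_zero, zero_div, add_zero]
    apply Finset.sum_congr rfl
    intro j _
    have : m + (j + 1) = m + 1 + j := by ring
    rw [this, Nat.factorial_succ]
    have hj : ((j.factorial : ℝ)) ≠ 0 := by positivity
    push_cast
    field_simp
  have hrpow : DD m * (-4 * (-(m : ℝ) - 1 / 2) * (1 - 4 * w) ^ (-(m : ℝ) - 1 / 2 - 1))
      = DD (m + 1) * (1 - 4 * w) ^ (-((m : ℕ) + 1 : ℝ) - 1 / 2) := by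
    have he : (-(m : ℝ) - 1 / 2 - 1) = (-((m : ℕ) + 1 : ℝ) - 1 / 2) := by push_cast; ring
    rw [he, DD_succ]
    ring
  have := h3.sub h4
  rw [hsum, hrpow] at this
  refine this.congr_deriv ?_
  unfold Uf
  push_cast
  ring_nf

lemma Uf_mono_zero (m : ℕ) {a b : ℝ} (ha : a ≤ b) (hb : 4 * b < 1) (ha0 : 0 ≤ a) :
    Uf m 0 a ≤ Uf m 0 b := by
  unfold Uf
  simp only [Finset.range_zero, Finset.sum_empty, sub_zero]
  have h1 : (0 : ℝ) < 1 - 4 * b := by linarith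
  have h2 : (0 : ℝ) < 1 - 4 * a := by linarith
  apply mul_le_mul_of_nonneg_left _ (DD_pos m).le
  have he : (-(m : ℝ) - 1 / 2) = -((m : ℝ) + 1 / 2) := by ring
  rw [he, Real.rpow_neg h1.le, Real.rpow_neg h2.le]
  have hpos : (0 : ℝ) < (1 - 4 * b) ^ ((m : ℝ) + 1 / 2) := Real.rpow_pos_of_pos h1 _
  apply inv_anti₀ hpos
  exact Real.rpow_le_rpow h1.le (by linarith) (by positivity)

lemma Uf_cont (m k : ℕ) {Z : ℝ} (hZ0 : 0 ≤ Z) (hZ : 4 * Z < 1) :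
    ContinuousOn (Uf m k) (Set.Icc 0 Z) := by
  unfold Uf
  apply ContinuousOn.sub
  · apply ContinuousOn.mul continuousOn_const
    apply ContinuousOn.rpow_const
    · fun_prop
    · intro x hx
      left
      simp only [Set.mem_Icc] at hx
      nlinarith [hx.1, hx.2]
  · fun_prop

lemma Uf_nonneg (k : ℕ) : ∀ (m : ℕ) {Z : ℝ}, 0 ≤ Z → 4 * Z < 1 → 0 ≤ Uf m k Z := by
  induction k with
  | zero =>
    intro m Z hZ0 hZ
    unfold Uf
    simp only [Finset.range_zero, Finset.sum_empty, sub_zero]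
    have h1 : (0 : ℝ) < 1 - 4 * Z := by linarith
    exact mul_nonneg (DD_pos m).le (Real.rpow_nonneg h1.le _)
  | succ k ih =>
    intro m Z hZ0 hZ
    have hmono : MonotoneOn (Uf m (k + 1)) (Set.Icc 0 Z) := by
      apply monotoneOn_of_deriv_nonneg (convex_Icc 0 Z) (Uf_cont m (k + 1) hZ0 hZ)
      · intro x hx
        rw [interior_Icc] at hx
        have hne : (1 : ℝ) - 4 * x ≠ 0 := by nlinarith [hx.1, hx.2]
        exact (Uf_hasDerivAt m k hne).differentiableAt.differentiableWithinAt
      · intro x hx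
        rw [interior_Icc] at hx
        have hne : (1 : ℝ) - 4 * x ≠ 0 := by nlinarith [hx.1, hx.2]
        rw [(Uf_hasDerivAt m k hne).deriv]
        exact ih (m + 1) hx.1.le (by nlinarith [hx.2])
    have := hmono (Set.left_mem_Icc.mpr hZ0) (Set.right_mem_Icc.mpr hZ0) hZ0
    rwa [Uf_zero] at this
  
lemma Uf_scale (k : ℕ) : ∀ (m : ℕ) {z y : ℝ}, 0 ≤ z → 4 * z < 1 → 0 ≤ y → y ≤ 1 →
    Uf m k (z * y) ≤ y ^ k * Uf m k z := by
  induction k with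
  | zero =>
    intro m z y hz0 hz hy0 hy1
    rw [pow_zero, one_mul]
    exact Uf_mono_zero m (by nlinarith) hz (by positivity)
  | succ k ih =>
    intro m z y hz0 hz hy0 hy1
    set Φ : ℝ → ℝ := fun x => y ^ (k + 1) * Uf m (k + 1) x - Uf m (k + 1) (x * y) with hΦ
    have hmono : MonotoneOn Φ (Set.Icc 0 z) := by
      have hderiv : ∀ x ∈ Set.Icc (0 : ℝ) z,
          HasDerivAt Φ (y ^ (k + 1) * Uf (m + 1) k x - Uf (m + 1) k (x * y) * y) x := by
        intro x hx
        simp only [Set.mem_Icc] at hx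
        have hne : (1 : ℝ) - 4 * x ≠ 0 := by nlinarith [hx.1, hx.2]
        have hne2 : (1 : ℝ) - 4 * (x * y) ≠ 0 := by nlinarith [hx.1, hx.2, mul_nonneg hx.1 hy0, mul_le_of_le_one_right hx.1 hy1]
        have hinner : HasDerivAt (fun x : ℝ => x * y) y x := hasDerivAt_mul_const y
        have hcomp : HasDerivAt (fun x : ℝ => Uf m (k + 1) (x * y)) (Uf (m + 1) k (x * y) * y) x :=
          by have hc := (Uf_hasDerivAt m k hne2).comp x hinner; exact hc
        exact ((Uf_hasDerivAt m k hne).const_mul (y ^ (k + 1))).sub hcomp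
      apply monotoneOn_of_deriv_nonneg (convex_Icc 0 z)
      · intro x hx
        exact (hderiv x hx).continuousAt.continuousWithinAt
      · intro x hx
        rw [interior_Icc] at hx
        exact (hderiv x ⟨hx.1.le, hx.2.le⟩).differentiableAt.differentiableWithinAt
      · intro x hx
        rw [interior_Icc] at hx
        rw [(hderiv x ⟨hx.1.le, hx.2.le⟩).deriv]
        have hihx := ih (m + 1) hx.1.le (by nlinarith [hx.2]) hy0 hy1
        have : Uf (m + 1) k (x * y) * y ≤ y ^ k * Uf (m + 1) k x * y :=
          mul_le_mul_of_nonneg_right hihx hy0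
        calc (0 : ℝ) ≤ y ^ (k + 1) * Uf (m + 1) k x - y ^ k * Uf (m + 1) k x * y := by
              rw [pow_succ]; ring_nf; exact le_refl _
          _ ≤ y ^ (k + 1) * Uf (m + 1) k x - Uf (m + 1) k (x * y) * y := by linarith
    have h0 : Φ 0 = 0 := by
      simp only [hΦ, zero_mul, Uf_zero, mul_zero, sub_zero]
    have := hmono (Set.left_mem_Icc.mpr hz0) (Set.right_mem_Icc.mpr hz0) hz0
    rw [h0] at this
    simp only [hΦ] at this
    linarith

/-! ### The binomial identity for `aCoeff` -/

/-- Partial binomial sums. -/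
noncomputable def Sf (p : ℝ) (n m : ℕ) : ℝ := ∑ k ∈ Finset.range m, (Nat.choose n k : ℝ) * p ^ k

lemma Sf_pascal (p : ℝ) (n m : ℕ) :
    Sf p (n + 1) (m + 1) = Sf p n (m + 1) + p * Sf p n m := by
  unfold Sf
  rw [Finset.sum_range_succ' (fun k => (Nat.choose (n + 1) k : ℝ) * p ^ k) m,
    Finset.sum_range_succ' (fun k => (Nat.choose n k : ℝ) * p ^ k) m]
  simp only [Nat.choose_succ_succ, Nat.choose_zero_right, Nat.cast_one, pow_zero, mul_one]
  push_cast
  rw [Finset.mul_sum]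
  rw [Finset.sum_congr rfl (fun j _ => by ring :
    ∀ j ∈ Finset.range m, ((Nat.choose n j : ℝ) + (Nat.choose n (j + 1) : ℝ)) * p ^ (j + 1)
      = (Nat.choose n (j + 1) : ℝ) * p ^ (j + 1) + p * ((Nat.choose n j : ℝ) * p ^ j))]
  rw [Finset.sum_add_distrib]
  ring

lemma Sf_rec (p : ℝ) (j : ℕ) :
    Sf p (2 * j + 3) (j + 2) = (1 + p) ^ 2 * Sf p (2 * j + 1) (j + 1)
      + (1 - p) * (Nat.choose (2 * j + 1) j : ℝ) * p ^ (j + 1) := by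
  have e1 : Sf p (2 * j + 3) (j + 2) = Sf p (2 * j + 2) (j + 2) + p * Sf p (2 * j + 2) (j + 1) := by
    have := Sf_pascal p (2 * j + 2) (j + 1)
    convert this using 3 <;> omega
  have e2 : Sf p (2 * j + 2) (j + 2) = Sf p (2 * j + 1) (j + 2) + p * Sf p (2 * j + 1) (j + 1) := by
    have := Sf_pascal p (2 * j + 1) (j + 1)
    convert this using 3 <;> omega
  have e3 : Sf p (2 * j + 2) (j + 1) = Sf p (2 * j + 1) (j + 1) + p * Sf p (2 * j + 1) j := by
    have := Sf_pascal p (2 * j + 1) j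
    convert this using 3 <;> omega
  have e4 : Sf p (2 * j + 1) (j + 2) = Sf p (2 * j + 1) (j + 1)
      + (Nat.choose (2 * j + 1) (j + 1) : ℝ) * p ^ (j + 1) := by
    unfold Sf
    rw [Finset.sum_range_succ]
  have e5 : Sf p (2 * j + 1) (j + 1) = Sf p (2 * j + 1) j + (Nat.choose (2 * j + 1) j : ℝ) * p ^ j := by
    unfold Sf
    rw [Finset.sum_range_succ]
  have hsymm : (Nat.choose (2 * j + 1) (j + 1) : ℝ) = (Nat.choose (2 * j + 1) j : ℝ) := by
    congr 1
    have := Nat.choose_symm (show j + 1 ≤ 2 * j + 1 by omega) (n := 2 * j + 1)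
    simpa [show 2 * j + 1 - (j + 1) = j by omega] using this.symm
  have e5' : Sf p (2 * j + 1) j = Sf p (2 * j + 1) (j + 1) - (Nat.choose (2 * j + 1) j : ℝ) * p ^ j := by
    rw [e5]; ring
  rw [e1, e2, e3, e4, e5', hsymm]
  ring

/-- Key closed form: `aCoeff p (i+1) = (1 + τ·cc p (i+1)) / (2(i+1))`. -/
lemma A_eq (p : ℝ) (i : ℕ) :
    2 * Sf p (2 * i + 1) (i + 1) = (1 + p) ^ (2 * i + 1)
      + (1 - p) * ∑ n ∈ Finset.range (i + 1), (Nat.choose (2 * n) n : ℝ) * p ^ n * (1 + p) ^ (2 * (i - n)) := by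
  induction i with
  | zero =>
    norm_num [Sf]
  | succ j ih =>
    have h2 : 2 * (j + 1) + 1 = 2 * j + 3 := by ring
    rw [h2, Sf_rec]
    have hdouble : (2 : ℝ) * (Nat.choose (2 * j + 1) j : ℝ) = (Nat.choose (2 * (j + 1)) (j + 1) : ℝ) := by
      have h := Nat.choose_succ_succ (2 * j + 1) j
      have hsymm : Nat.choose (2 * j + 1) (j + 1) = Nat.choose (2 * j + 1) j := by
        have := Nat.choose_symm (show j + 1 ≤ 2 * j + 1 by omega) (n := 2 * j + 1)
        simpa [show 2 * j + 1 - (j + 1) = j by omega] using this.symm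
      have : Nat.choose (2 * (j + 1)) (j + 1) = Nat.choose (2 * j + 1) j + Nat.choose (2 * j + 1) (j + 1) := by
        have h22 : 2 * (j + 1) = (2 * j + 1) + 1 := by ring
        rw [h22, Nat.choose_succ_succ]
      rw [this, hsymm]
      push_cast
      ring
    have hsum : ∑ n ∈ Finset.range (j + 2), (Nat.choose (2 * n) n : ℝ) * p ^ n * (1 + p) ^ (2 * (j + 1 - n))
        = (1 + p) ^ 2 * (∑ n ∈ Finset.range (j + 1), (Nat.choose (2 * n) n : ℝ) * p ^ n * (1 + p) ^ (2 * (j - n)))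
          + (Nat.choose (2 * (j + 1)) (j + 1) : ℝ) * p ^ (j + 1) := by
      rw [Finset.sum_range_succ, Finset.mul_sum]
      have : ∀ n ∈ Finset.range (j + 1),
          (Nat.choose (2 * n) n : ℝ) * p ^ n * (1 + p) ^ (2 * (j + 1 - n))
            = (1 + p) ^ 2 * ((Nat.choose (2 * n) n : ℝ) * p ^ n * (1 + p) ^ (2 * (j - n))) := by
        intro n hn
        simp only [Finset.mem_range] at hn
        have he : 2 * (j + 1 - n) = 2 * (j - n) + 2 := by omega
        rw [he, pow_add]
        ring
      rw [Finset.sum_congr rfl this]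
      simp [Nat.sub_self]
    rw [hsum]
    have hpow : (1 + p) ^ (2 * j + 3) = (1 + p) ^ 2 * (1 + p) ^ (2 * j + 1) := by
      rw [show 2 * j + 3 = 2 + (2 * j + 1) by omega, pow_add]
    rw [hpow]
    linear_combination (1 + p) ^ 2 * ih + (1 - p) * p ^ (j + 1) * hdouble

lemma one_add_p_pos {p : ℝ} (hp0 : 0 < p) : (0 : ℝ) < 1 + p := by linarith

lemma aCoeff_eq {p : ℝ} (hp0 : 0 < p) (hp1 : p < 1) (i : ℕ) :
    aCoeff p (i + 1) = (1 + tt p * cc p (i + 1)) / (2 * (i + 1)) := by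
  have hp : (0 : ℝ) < 1 + p := by linarith
  have hB : ∑ n ∈ Finset.range (i + 1), (Nat.choose (2 * n) n : ℝ) * p ^ n * (1 + p) ^ (2 * (i - n))
      = cc p (i + 1) * (1 + p) ^ (2 * i) := by
    unfold cc
    rw [Finset.sum_mul]
    apply Finset.sum_congr rfl
    intro n hn
    simp only [Finset.mem_range] at hn
    unfold zz
    have he : 2 * i = 2 * (i - n) + 2 * n := by omega
    rw [he, pow_add, div_pow, ← pow_mul]
    have h2n : ((1 + p) ^ 2) ^ n ≠ 0 := by positivity
    field_simp
  have hnum : (∑ k ∈ Finset.range (i + 1), (Nat.choose (2 * (i + 1) - 1) k : ℝ) * p ^ k)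
      = Sf p (2 * i + 1) (i + 1) := by
    unfold Sf
    simp only [show 2 * (i + 1) - 1 = 2 * i + 1 by omega]
  unfold aCoeff
  rw [hnum]
  have hA := A_eq p i
  rw [hB] at hA
  have hexp : 2 * (i + 1) - 1 = 2 * i + 1 := by omega
  rw [hexp]
  have hSf : Sf p (2 * i + 1) (i + 1)
      = ((1 + p) ^ (2 * i + 1) + (1 - p) * (cc p (i + 1) * (1 + p) ^ (2 * i))) / 2 := by
    linarith
  rw [hSf]
  unfold tt
  have h1 : ((i : ℝ) + 1) ≠ 0 := by positivity
  have h2 : (1 + p) ^ (2 * i + 1) ≠ 0 := by positivity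
  have h3 : (1 + p) ^ (2 * i) ≠ 0 := by positivity
  rw [pow_succ] at *
  push_cast
  field_simp

lemma pow_term_deriv (j : ℕ) (x : ℝ) :
    HasDerivAt (fun y : ℝ => y ^ (j + 1) / ((j : ℝ) + 1)) (x ^ j) x := by
  have h := (hasDerivAt_pow (j + 1) x).div_const ((j : ℝ) + 1)
  have hj : ((j : ℝ) + 1) ≠ 0 := by positivity
  refine h.congr_deriv ?_
  simp only [Nat.add_sub_cancel]
  push_cast
  field_simp

lemma log_bound (n : ℕ) {y : ℝ} (hy0 : 0 ≤ y) (hyb : y ≤ 1 - 1 / ((n : ℝ) + 1)) :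
    -Real.log (1 - y) ≤ (∑ j ∈ Finset.range (n + 1), y ^ (j + 1) / ((j : ℝ) + 1)) + y ^ (n + 1) := by
  have hn1 : (0 : ℝ) < (n : ℝ) + 1 := by positivity
  set b : ℝ := 1 - 1 / ((n : ℝ) + 1) with hb
  have hblt : b < 1 := by
    rw [hb]
    have : 0 < 1 / ((n : ℝ) + 1) := by positivity
    linarith
  set h : ℝ → ℝ := fun y =>
    (∑ j ∈ Finset.range (n + 1), y ^ (j + 1) / ((j : ℝ) + 1)) + y ^ (n + 1) + Real.log (1 - y)
    with hh
  have hder : ∀ x ∈ Set.Icc (0 : ℝ) b, x < 1 → HasDerivAt h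
      ((∑ j ∈ Finset.range (n + 1), x ^ j) + ((n : ℝ) + 1) * x ^ n + -1 / (1 - x)) x := by
    intro x _ hx1
    have h1x : (1 : ℝ) - x ≠ 0 := by intro hc; rw [sub_eq_zero] at hc; exact absurd hc.symm (ne_of_lt hx1)
    have hs : HasDerivAt (fun y : ℝ => ∑ j ∈ Finset.range (n + 1), y ^ (j + 1) / ((j : ℝ) + 1))
        (∑ j ∈ Finset.range (n + 1), x ^ j) x := by
      apply HasDerivAt.fun_sum
      intro j _
      exact pow_term_deriv j x
    have hp : HasDerivAt (fun y : ℝ => y ^ (n + 1)) (((n : ℝ) + 1) * x ^ n) x := by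
      have := hasDerivAt_pow (n + 1) x
      simpa [Nat.add_sub_cancel] using this
    have hlog : HasDerivAt (fun y : ℝ => Real.log (1 - y)) (-1 / (1 - x)) x := by
      have h1 : HasDerivAt (fun y : ℝ => 1 - y) (-1) x := by
        simpa using (hasDerivAt_id x).const_sub 1
      exact h1.log h1x
    exact (hs.add hp).add hlog
  have hmono : MonotoneOn h (Set.Icc 0 b) := by
    apply monotoneOn_of_deriv_nonneg (convex_Icc 0 b)
    · intro x hx
      exact (hder x hx (lt_of_le_of_lt hx.2 hblt)).continuousAt.continuousWithinAt
    · intro x hx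
      rw [interior_Icc] at hx
      exact (hder x ⟨hx.1.le, hx.2.le⟩ (lt_of_lt_of_le hx.2 hblt.le)).differentiableAt.differentiableWithinAt
    · intro x hx
      rw [interior_Icc] at hx
      have hx1 : x < 1 := lt_of_lt_of_le hx.2 hblt.le
      rw [(hder x ⟨hx.1.le, hx.2.le⟩ hx1).deriv]
      have h1x : (0 : ℝ) < 1 - x := by linarith
      have hxne : x ≠ 1 := ne_of_lt hx1
      rw [geom_sum_eq hxne]
      have hrw : (x ^ (n + 1) - 1) / (x - 1) = (1 - x ^ (n + 1)) / (1 - x) := by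
        rw [← neg_sub 1 (x ^ (n + 1)), ← neg_sub 1 x, neg_div_neg_eq]
      rw [hrw]
      have hfrac : (1 - x ^ (n + 1)) / (1 - x) + -1 / (1 - x) = -(x ^ (n + 1)) / (1 - x) := by
        rw [← add_div]
        ring_nf
      have hkey : x ^ (n + 1) / (1 - x) ≤ ((n : ℝ) + 1) * x ^ n := by
        rw [div_le_iff₀ h1x]
        have hb1 : 1 / ((n : ℝ) + 1) ≤ 1 - x := by
          have : x ≤ 1 - 1 / ((n : ℝ) + 1) := hx.2.le
          linarith
        have h1 : 1 ≤ (1 - x) * ((n : ℝ) + 1) := (div_le_iff₀ hn1).mp hb1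
        have hxn : (0 : ℝ) ≤ x ^ n := pow_nonneg hx.1.le n
        have hps : x ^ (n + 1) = x ^ n * x := pow_succ x n
        nlinarith [hx.1.le, hx1.le]
      have hnd : -x ^ (n + 1) / (1 - x) = -(x ^ (n + 1) / (1 - x)) := neg_div _ _
      linarith [hfrac, hkey, hnd]
  have h0 : h 0 = 0 := by
    simp [hh]
  have hyb' : y ∈ Set.Icc (0 : ℝ) b := ⟨hy0, hyb⟩
  have hb0 : (0 : ℝ) ≤ b := by
    rw [hb]
    have h1 : 1 / ((n : ℝ) + 1) ≤ 1 := by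
      rw [div_le_one hn1]
      have := Nat.cast_nonneg (α := ℝ) n
      linarith
    linarith
  have := hmono (Set.left_mem_Icc.mpr hb0) hyb' hy0
  rw [h0] at this
  simp only [hh] at this
  linarith

lemma zz_pos {p : ℝ} (hp0 : 0 < p) (hp1 : p < 1) : 0 < zz p := by
  unfold zz; positivity

lemma zz_lt {p : ℝ} (hp0 : 0 < p) (hp1 : p < 1) : 4 * zz p < 1 := by
  unfold zz
  rw [show 4 * (p / (1 + p) ^ 2) = (4 * p) / (1 + p) ^ 2 by ring,
    div_lt_one (by positivity)]
  nlinarith [sq_nonneg (1 - p)]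

lemma tt_pos {p : ℝ} (hp0 : 0 < p) (hp1 : p < 1) : 0 < tt p := by
  unfold tt
  apply div_pos <;> linarith

lemma tau_sq {p : ℝ} (hp0 : 0 < p) (hp1 : p < 1) : 1 - 4 * zz p = tt p ^ 2 := by
  unfold tt zz
  have h : (1 + p) ≠ 0 := by linarith
  field_simp
  ring

lemma rpow_neg_half {a : ℝ} (ha : 0 < a) : a ^ (-(1 / 2) : ℝ) = (Real.sqrt a)⁻¹ := by
  rw [Real.rpow_neg ha.le, Real.sqrt_eq_rpow]

lemma Uf_head (k : ℕ) (w : ℝ) :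
    Uf 0 k w = (1 - 4 * w) ^ (-(1 / 2) : ℝ)
      - ∑ j ∈ Finset.range k, (Nat.choose (2 * j) j : ℝ) * w ^ j := by
  unfold Uf
  have h0 : DD 0 = 1 := by unfold DD; norm_num
  rw [h0]
  norm_num
  apply Finset.sum_congr rfl
  intro j _
  rw [← DD_div_factorial j]
  ring

set_option maxHeartbeats 1000000 in
/-- The pointwise derivative inequality `W ≤ m'` coming from the remainder scaling. -/
lemma deriv_ineq {p : ℝ} (hp0 : 0 < p) (hp1 : p < 1) (n : ℕ) {x : ℝ}
    (hx0 : 0 < x) (hx1 : x < 1) :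
    ∑ j ∈ Finset.range (n + 1), ((1 - tt p * cc p (j + 1)) / 2) * x ^ j
      ≤ -((1 + p) * (-(4 * zz p) / (2 * Real.sqrt (1 - 4 * zz p * x)))
          / ((1 + p) * Real.sqrt (1 - 4 * zz p * x) + (1 - p))) := by
  have hp1p : (0 : ℝ) < 1 + p := by linarith
  have hz0 := zz_pos hp0 hp1
  have hz4 := zz_lt hp0 hp1
  have hτ := tt_pos hp0 hp1
  have hτsq := tau_sq hp0 hp1
  have hSq : 0 < 1 - 4 * zz p * x := by nlinarith
  set S := Real.sqrt (1 - 4 * zz p * x) with hSdef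
  have hS : 0 < S := Real.sqrt_pos.mpr hSq
  have hS2 : S ^ 2 = 1 - 4 * zz p * x := Real.sq_sqrt hSq.le
  have hI : 0 < (1 + p) * S + (1 - p) := by nlinarith
  -- key3 : scaled remainder bound
  have key3 : Uf 0 (n + 2) (zz p * x) ≤ x ^ (n + 1) * Uf 0 (n + 2) (zz p) := by
    have h1 := Uf_scale (n + 2) 0 hz0.le hz4 hx0.le hx1.le
    have h2 := Uf_nonneg (n + 2) 0 hz0.le hz4
    have h3 : x ^ (n + 2) ≤ x ^ (n + 1) :=
      pow_le_pow_of_le_one hx0.le hx1.le (by omega)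
    calc Uf 0 (n + 2) (zz p * x) ≤ x ^ (n + 2) * Uf 0 (n + 2) (zz p) := h1
      _ ≤ x ^ (n + 1) * Uf 0 (n + 2) (zz p) := mul_le_mul_of_nonneg_right h3 h2
  have hinv1 : (1 - 4 * (zz p * x)) ^ (-(1 / 2) : ℝ) = S⁻¹ := by
    rw [show 1 - 4 * (zz p * x) = 1 - 4 * zz p * x by ring, hSdef]
    exact rpow_neg_half hSq
  have hinv2 : (1 - 4 * zz p) ^ (-(1 / 2) : ℝ) = (tt p)⁻¹ := by
    rw [rpow_neg_half (by linarith), hτsq, Real.sqrt_sq hτ.le]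
  have hccz : cc p (n + 2) = ∑ j ∈ Finset.range (n + 2), (Nat.choose (2 * j) j : ℝ) * zz p ^ j := rfl
  have key3' : S⁻¹ - (∑ j ∈ Finset.range (n + 2), (Nat.choose (2 * j) j : ℝ) * (zz p * x) ^ j)
      ≤ x ^ (n + 1) * ((tt p)⁻¹ - cc p (n + 2)) := by
    have h := key3
    rw [Uf_head, Uf_head, hinv1, hinv2] at h
    rw [hccz]
    exact h
  -- telescoping
  have hccd : ∀ j : ℕ, cc p (j + 1 + 1) = cc p (j + 1)
      + (Nat.choose (2 * (j + 1)) (j + 1) : ℝ) * zz p ^ (j + 1) := by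
    intro j
    unfold cc
    rw [Finset.sum_range_succ]
  have t1 : ∑ j ∈ Finset.range (n + 1), (x ^ j - x ^ (j + 1)) = 1 - x ^ (n + 1) := by
    have := Finset.sum_range_sub' (fun j => x ^ j) (n + 1)
    simpa using this
  have t2 : ∑ j ∈ Finset.range (n + 1), cc p (j + 1) * (x ^ j - x ^ (j + 1))
      = (∑ j ∈ Finset.range (n + 2), (Nat.choose (2 * j) j : ℝ) * (zz p * x) ^ j)
        - cc p (n + 2) * x ^ (n + 1) := by
    have split : ∀ j ∈ Finset.range (n + 1), cc p (j + 1) * (x ^ j - x ^ (j + 1))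
        = (cc p (j + 1) * x ^ j - cc p (j + 1 + 1) * x ^ (j + 1))
          + (Nat.choose (2 * (j + 1)) (j + 1) : ℝ) * (zz p * x) ^ (j + 1) := by
      intro j _
      rw [hccd j, mul_pow]
      ring
    rw [Finset.sum_congr rfl split, Finset.sum_add_distrib]
    have tele := Finset.sum_range_sub' (fun j => cc p (j + 1) * x ^ j) (n + 1)
    rw [tele]
    have hQ : (∑ j ∈ Finset.range (n + 2), (Nat.choose (2 * j) j : ℝ) * (zz p * x) ^ j)
        = (∑ j ∈ Finset.range (n + 1),
            (Nat.choose (2 * (j + 1)) (j + 1) : ℝ) * (zz p * x) ^ (j + 1)) + 1 := by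
      rw [Finset.sum_range_succ' (fun j => (Nat.choose (2 * j) j : ℝ) * (zz p * x) ^ j) (n + 1)]
      simp
    have hcc1 : cc p (0 + 1) = 1 := by unfold cc; simp
    rw [hQ, hcc1]
    have : (n + 1 + 1) = n + 2 := rfl
    rw [this]
    ring
  -- closed form of the log-derivative
  set Dm : ℝ := -((1 + p) * (-(4 * zz p) / (2 * S)) / ((1 + p) * S + (1 - p))) with hDm
  have hτp : tt p * (1 + p) = 1 - p := by
    unfold tt; field_simp
  have hτ2 : tt p * (1 - p) = (1 - 4 * zz p) * (1 + p) := by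
    unfold tt zz; field_simp; ring
  have key2 : Dm * (2 * (1 - x)) = 1 - tt p / S := by
    have e2 : Dm = (4 * zz p * (1 + p)) / (2 * S * ((1 + p) * S + (1 - p))) := by
      rw [hDm]
      field_simp
    have hdiv1 : 1 - tt p / S = (S - tt p) / S := by
      field_simp
    have hpos2 : (0 : ℝ) < 2 * S * ((1 + p) * S + (1 - p)) := by positivity
    rw [e2, hdiv1, div_mul_eq_mul_div, div_eq_div_iff hpos2.ne' hS.ne']
    have expand : (S - tt p) * (2 * S * ((1 + p) * S + (1 - p)))
        = (2 * ((1 + p) * S ^ 2 + (1 - p) * S - (tt p * (1 + p)) * S - tt p * (1 - p))) * S := by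
      ring
    rw [expand, hS2, hτp, hτ2]
    ring
  -- the weighted geometric sum in closed form
  set W : ℝ := ∑ j ∈ Finset.range (n + 1), ((1 - tt p * cc p (j + 1)) / 2) * x ^ j with hW
  have key1 : 2 * (1 - x) * W = (1 - x ^ (n + 1))
      - tt p * ((∑ j ∈ Finset.range (n + 2), (Nat.choose (2 * j) j : ℝ) * (zz p * x) ^ j)
        - cc p (n + 2) * x ^ (n + 1)) := by
    rw [hW, Finset.mul_sum]
    have hterm : ∀ j ∈ Finset.range (n + 1), 2 * (1 - x) * (((1 - tt p * cc p (j + 1)) / 2) * x ^ j)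
        = (x ^ j - x ^ (j + 1)) - tt p * (cc p (j + 1) * (x ^ j - x ^ (j + 1))) := by
      intro j _
      ring
    rw [Finset.sum_congr rfl hterm, Finset.sum_sub_distrib, t1, ← Finset.mul_sum, t2]
  have hτQ : tt p * (S⁻¹ - (∑ j ∈ Finset.range (n + 2), (Nat.choose (2 * j) j : ℝ) * (zz p * x) ^ j))
      ≤ x ^ (n + 1) * (1 - tt p * cc p (n + 2)) := by
    have h := mul_le_mul_of_nonneg_left key3' hτ.le
    have e : tt p * (x ^ (n + 1) * ((tt p)⁻¹ - cc p (n + 2)))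
        = x ^ (n + 1) * (1 - tt p * cc p (n + 2)) := by
      field_simp
    linarith [h, e.ge, e.le]
  have h2x : (0 : ℝ) < 2 * (1 - x) := by linarith
  have hfinal : 0 ≤ (Dm - W) * (2 * (1 - x)) := by
    have e : (Dm - W) * (2 * (1 - x)) = Dm * (2 * (1 - x)) - 2 * (1 - x) * W := by ring
    rw [e, key2, key1]
    have hts : tt p / S = tt p * S⁻¹ := by rw [div_eq_mul_inv]
    rw [hts]
    nlinarith [hτQ]
  nlinarith [hfinal, h2x]

lemma m_bound {p : ℝ} (hp0 : 0 < p) (hp1 : p < 1) (n : ℕ) {y : ℝ} (hy0 : 0 ≤ y)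
    (hyb : y ≤ 1 - 1 / ((n : ℝ) + 1)) :
    (∑ j ∈ Finset.range (n + 1), ((1 - tt p * cc p (j + 1)) / 2) * (y ^ (j + 1) / ((j : ℝ) + 1)))
      ≤ Real.log 2 - Real.log ((1 + p) * Real.sqrt (1 - 4 * zz p * y) + (1 - p)) := by
  have hp1p : (0 : ℝ) < 1 + p := by linarith
  have hz0 := zz_pos hp0 hp1
  have hz4 := zz_lt hp0 hp1
  have hn1 : (0 : ℝ) < (n : ℝ) + 1 := by positivity
  set b : ℝ := 1 - 1 / ((n : ℝ) + 1) with hb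
  have hblt : b < 1 := by
    rw [hb]; have : 0 < 1 / ((n : ℝ) + 1) := by positivity
    linarith
  have hb0 : (0 : ℝ) ≤ b := by
    rw [hb]
    have h1 : 1 / ((n : ℝ) + 1) ≤ 1 := by
      rw [div_le_one hn1]; have := Nat.cast_nonneg (α := ℝ) n; linarith
    linarith
  set M : ℝ → ℝ := fun y =>
    (Real.log 2 - Real.log ((1 + p) * Real.sqrt (1 - 4 * zz p * y) + (1 - p)))
      - ∑ j ∈ Finset.range (n + 1), ((1 - tt p * cc p (j + 1)) / 2) * (y ^ (j + 1) / ((j : ℝ) + 1))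
    with hM
  have hSpos : ∀ x : ℝ, 0 ≤ x → x ≤ 1 → 0 < 1 - 4 * zz p * x := by
    intro x h0 h1
    nlinarith
  have hinnerpos : ∀ x : ℝ, 0 ≤ x → x ≤ 1 →
      0 < (1 + p) * Real.sqrt (1 - 4 * zz p * x) + (1 - p) := by
    intro x h0 h1
    have := Real.sqrt_pos.mpr (hSpos x h0 h1)
    nlinarith
  have hder : ∀ x : ℝ, 0 ≤ x → x ≤ b → HasDerivAt M
      (-((1 + p) * (-(4 * zz p) / (2 * Real.sqrt (1 - 4 * zz p * x)))
          / ((1 + p) * Real.sqrt (1 - 4 * zz p * x) + (1 - p)))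
        - ∑ j ∈ Finset.range (n + 1), ((1 - tt p * cc p (j + 1)) / 2) * x ^ j) x := by
    intro x hx0 hxb
    have hx1 : x ≤ 1 := le_trans hxb hblt.le
    have hS := hSpos x hx0 hx1
    have hI := hinnerpos x hx0 hx1
    have hbase : HasDerivAt (fun y : ℝ => 1 - 4 * zz p * y) (-(4 * zz p)) x := by
      simpa using ((hasDerivAt_id x).const_mul (4 * zz p)).const_sub 1
    have hsqrt : HasDerivAt (fun y : ℝ => Real.sqrt (1 - 4 * zz p * y))
        (-(4 * zz p) / (2 * Real.sqrt (1 - 4 * zz p * x))) x := hbase.sqrt hS.ne'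
    have hinner : HasDerivAt (fun y : ℝ => (1 + p) * Real.sqrt (1 - 4 * zz p * y) + (1 - p))
        ((1 + p) * (-(4 * zz p) / (2 * Real.sqrt (1 - 4 * zz p * x)))) x :=
      (hsqrt.const_mul (1 + p)).add_const (1 - p)
    have hlogpart : HasDerivAt (fun y : ℝ =>
        Real.log 2 - Real.log ((1 + p) * Real.sqrt (1 - 4 * zz p * y) + (1 - p)))
        (-((1 + p) * (-(4 * zz p) / (2 * Real.sqrt (1 - 4 * zz p * x)))
          / ((1 + p) * Real.sqrt (1 - 4 * zz p * x) + (1 - p)))) x :=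
      (hinner.log hI.ne').const_sub (Real.log 2)
    have hsum : HasDerivAt (fun y : ℝ =>
        ∑ j ∈ Finset.range (n + 1), ((1 - tt p * cc p (j + 1)) / 2) * (y ^ (j + 1) / ((j : ℝ) + 1)))
        (∑ j ∈ Finset.range (n + 1), ((1 - tt p * cc p (j + 1)) / 2) * x ^ j) x := by
      apply HasDerivAt.fun_sum
      intro j _
      exact (pow_term_deriv j x).const_mul _
    exact hlogpart.sub hsum
  have hmono : MonotoneOn M (Set.Icc 0 b) := by
    apply monotoneOn_of_deriv_nonneg (convex_Icc 0 b)
    · intro x hx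
      exact (hder x hx.1 hx.2).continuousAt.continuousWithinAt
    · intro x hx
      rw [interior_Icc] at hx
      exact (hder x hx.1.le hx.2.le).differentiableAt.differentiableWithinAt
    · intro x hx
      rw [interior_Icc] at hx
      rw [(hder x hx.1.le hx.2.le).deriv]
      have := deriv_ineq hp0 hp1 n hx.1 (lt_of_lt_of_le hx.2 hblt.le)
      linarith
  have h0 : M 0 = 0 := by
    rw [hM]
    norm_num
  have hyb' : y ∈ Set.Icc (0 : ℝ) b := ⟨hy0, hyb⟩
  have := hmono (Set.left_mem_Icc.mpr hb0) hyb' hy0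
  rw [h0] at this
  simp only [hM] at this
  linarith

lemma aCoeff_nonneg {p : ℝ} (hp0 : 0 < p) (hp1 : p < 1) (i : ℕ) : 0 ≤ aCoeff p i := by
  unfold aCoeff
  apply div_nonneg
  · apply Finset.sum_nonneg
    intro k _
    positivity
  · positivity

lemma qp_pos {p : ℝ} (hp0 : 0 < p) (hp1 : p < 1) {x : ℝ} (hx : 0 < x) : 0 < qp p x := by
  unfold qp
  apply div_pos _ (by linarith)
  rw [sub_pos]
  rw [Real.lt_sqrt (by linarith)]
  nlinarith

lemma qp_fixed {p : ℝ} (hp0 : 0 < p) (hp1 : p < 1) {x : ℝ} (hx0 : 0 ≤ x) :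
    p * qp p x ^ 2 + (1 - p) * qp p x = x := by
  unfold qp
  have hd0 : (0 : ℝ) ≤ (1 - p) ^ 2 + 4 * p * x := by positivity
  have hsq := Real.sq_sqrt hd0
  have hp' : (2 : ℝ) * p ≠ 0 := by positivity
  set s := Real.sqrt ((1 - p) ^ 2 + 4 * p * x) with hs
  field_simp
  linear_combination hsq

lemma phi_eq {p : ℝ} (hp0 : 0 < p) (hp1 : p < 1) {y : ℝ} (hy0 : 0 ≤ y) (hy1 : y < 1) :
    -Real.log (qp p (1 - y)) = -Real.log (1 - y)
      - (Real.log 2 - Real.log ((1 + p) * Real.sqrt (1 - 4 * zz p * y) + (1 - p))) := by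
  have hp1p : (0 : ℝ) < 1 + p := by linarith
  have hz0 := zz_pos hp0 hp1
  have hz4 := zz_lt hp0 hp1
  have hSq : 0 < 1 - 4 * zz p * y := by nlinarith
  set S := Real.sqrt (1 - 4 * zz p * y) with hSdef
  have hS : 0 < S := Real.sqrt_pos.mpr hSq
  have hS2 : S ^ 2 = 1 - 4 * zz p * y := Real.sq_sqrt hSq.le
  have hI : 0 < (1 + p) * S + (1 - p) := by nlinarith
  have h1y : (0 : ℝ) < 1 - y := by linarith
  have hzz : zz p * (1 + p) ^ 2 = p := by
    unfold zz; field_simp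
  have hd : (1 - p) ^ 2 + 4 * p * (1 - y) = (1 + p) ^ 2 * (1 - 4 * zz p * y) := by
    unfold zz
    field_simp
    ring
  have hq : qp p (1 - y) = 2 * (1 - y) / ((1 + p) * S + (1 - p)) := by
    unfold qp
    rw [hd, Real.sqrt_mul (by positivity), Real.sqrt_sq hp1p.le, ← hSdef]
    rw [div_eq_div_iff (by positivity) hI.ne']
    linear_combination (1 + p) ^ 2 * hS2 - 4 * y * hzz
  rw [hq]
  rw [Real.log_div (by positivity) hI.ne', Real.log_mul (by norm_num) h1y.ne']
  ring

end S9

theorem stmt9 (p : ℝ) (hp0 : 0 < p) (hp1 : p < 1) (μ : ℝ) (hμ : 0 < μ)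
    (N : ℕ) (hN : 1 ≤ N) :
    ∀ x ∈ Set.Icc (1 / (N : ℝ)) 1, deSym p μ N x < x := by
  obtain ⟨n, rfl⟩ : ∃ n, N = n + 1 := ⟨N - 1, by omega⟩
  intro x hx
  obtain ⟨hx1, hx2⟩ := hx
  have hp1p : (0 : ℝ) < 1 + p := by linarith
  have hn1 : (0 : ℝ) < (n : ℝ) + 1 := by positivity
  have hNcast : ((n + 1 : ℕ) : ℝ) = (n : ℝ) + 1 := by push_cast; ring
  rw [hNcast] at hx1
  have hx0 : 0 < x := lt_of_lt_of_le (by positivity) hx1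
  set y : ℝ := 1 - x with hy
  have hy0 : 0 ≤ y := by rw [hy]; linarith
  have hyb : y ≤ 1 - 1 / ((n : ℝ) + 1) := by rw [hy]; linarith
  have hy1 : y < 1 := by rw [hy]; linarith
  have hx_eq : x = 1 - y := by rw [hy]; ring
  -- positivity of normalization constant
  have hG : 0 ≤ Gpart p (n + 1) := by
    apply Finset.sum_nonneg
    intro i _
    exact S9.aCoeff_nonneg hp0 hp1 i
  have hD : 0 < μ + Gpart p (n + 1) + 1 := by linarith
  -- simplify lamBarN
  set A : ℝ := ∑ i ∈ Finset.Icc 1 (n + 1), aCoeff p i * y ^ i with hA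
  have hlam : lamBarN p μ (n + 1) x = Real.exp (-(μ + A + y ^ (n + 1))) := by
    unfold lamBarN rhoN
    congr 1
    rw [← hy, hA]
    field_simp
    try ring
  -- the main inequality
  set q : ℝ := qp p x with hqdef
  have hq0 : 0 < q := S9.qp_pos hp0 hp1 hx0
  have hlog1 := S9.log_bound n hy0 hyb
  have hm := S9.m_bound hp0 hp1 n hy0 hyb
  have hphi := S9.phi_eq hp0 hp1 hy0 hy1
  have hq_eq : q = qp p (1 - y) := by rw [hqdef, hx_eq]
  have hASum : A = ∑ j ∈ Finset.range (n + 1),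
      ((1 + S9.tt p * S9.cc p (j + 1)) / (2 * ((j : ℝ) + 1))) * y ^ (j + 1) := by
    rw [hA, ← Finset.Ico_add_one_right_eq_Icc, Finset.sum_Ico_eq_sum_range]
    simp only [show n + 1 + 1 - 1 = n + 1 from rfl]
    apply Finset.sum_congr rfl
    intro j _
    rw [show 1 + j = j + 1 by omega, S9.aCoeff_eq hp0 hp1 j]
    try push_cast
    try ring
  have hcomb : ∑ j ∈ Finset.range (n + 1), y ^ (j + 1) / ((j : ℝ) + 1)
      - ∑ j ∈ Finset.range (n + 1), ((1 - S9.tt p * S9.cc p (j + 1)) / 2) * (y ^ (j + 1) / ((j : ℝ) + 1))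
      = ∑ j ∈ Finset.range (n + 1), ((1 + S9.tt p * S9.cc p (j + 1)) / (2 * ((j : ℝ) + 1))) * y ^ (j + 1) := by
    rw [← Finset.sum_sub_distrib]
    apply Finset.sum_congr rfl
    intro j _
    have hj : ((j : ℝ) + 1) ≠ 0 := by positivity
    field_simp
    ring
  have hmain : -Real.log q < μ + A + y ^ (n + 1) := by
    rw [hq_eq, hphi, hASum]
    have := hcomb
    linarith
  -- conclude
  have hL : lamBarN p μ (n + 1) x < q := by
    rw [hlam, ← Real.exp_log hq0]
    exact Real.exp_lt_exp.mpr (by linarith)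
  have hL0 : 0 < lamBarN p μ (n + 1) x := Real.exp_pos _
  have hfix : p * q ^ 2 + (1 - p) * q = x := S9.qp_fixed hp0 hp1 hx0.le
  unfold deSym
  set L : ℝ := lamBarN p μ (n + 1) x
  have h1 : 0 < q - L := by linarith
  have h2 : 0 < (1 - p) + p * (q + L) := by nlinarith
  nlinarith [mul_pos h1 h2]
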